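/- For P, Q > 0, define φ(α) = arg(e^{−2iα}P + Q) and the sequence α₀ = α ∈ (−π/2, π/2), α_{n+1} = α_n + φ(α_n). Then α_n converges to 0 as n → ∞. -/

import Mathlib

open Complex Real Filter

noncomputable def phiPQ (P Q α : ℝ) : ℝ := (Complex.exp (-2 * α * Complex.I) * P + Q).arg

lemma zim (P Q α : ℝ) : (Complex.exp (-2 * α * Complex.I) * P + Q).im = -(P * Real.sin (2*α)) := by
  have h : (-2 * (α:ℂ) * Complex.I) = ((-(2*α) : ℝ) : ℂ) * Complex.I := by push_cast; ring
  rw [h]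
  simp only [Complex.add_im, Complex.mul_im, Complex.exp_ofReal_mul_I_im,
    Complex.exp_ofReal_mul_I_re, Complex.ofReal_re, Complex.ofReal_im, Real.sin_neg]
  ring

lemma phi_mem {P Q : ℝ} (hP : 0 < P) (hQ : 0 < Q) {α : ℝ} (h0 : 0 < α) (h : α < π/2) :
    phiPQ P Q α ∈ Set.Ioo (-(2*α)) 0 := by
  have hpi := Real.pi_pos
  have hsin : 0 < Real.sin (2*α) :=
    Real.sin_pos_of_pos_of_lt_pi (by linarith) (by linarith)
  set z := Complex.exp (-2 * (α:ℂ) * Complex.I) * P + Q with hzdef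
  have him : z.im < 0 := by
    rw [hzdef, zim]; nlinarith
  have hlt : Complex.arg z < 0 := Complex.arg_neg_iff.2 him
  set w := (P:ℂ) + Q * Complex.exp (2 * (α:ℂ) * Complex.I) with hwdef
  have hwim : w.im = Q * Real.sin (2*α) := by
    have h : (2 * (α:ℂ) * Complex.I) = (((2*α) : ℝ) : ℂ) * Complex.I := by push_cast; ring
    rw [hwdef, h]
    simp only [Complex.add_im, Complex.mul_im, Complex.exp_ofReal_mul_I_im,
      Complex.exp_ofReal_mul_I_re, Complex.ofReal_re, Complex.ofReal_im]
    ring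
  have hwim_pos : 0 < w.im := by rw [hwim]; positivity
  have hw0 : w ≠ 0 := by
    intro e; rw [e] at hwim_pos; simp at hwim_pos
  have habs : 0 < ‖w‖ := norm_pos_iff.mpr hw0
  have hargw_pos : 0 < Complex.arg w := by
    by_contra h'
    push_neg at h'
    have hs := Real.sin_nonpos_of_nonpos_of_neg_pi_le h' (Complex.neg_pi_lt_arg w).le
    rw [Complex.sin_arg] at hs
    have : 0 < w.im / ‖w‖ := div_pos hwim_pos habs
    linarith
  have hargw_le : Complex.arg w ≤ π := Complex.arg_le_pi w
  have key : Complex.exp (2*(α:ℂ)*Complex.I) * Complex.exp (-2*(α:ℂ)*Complex.I) = 1 := by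
    rw [← Complex.exp_add, show (2*(α:ℂ)*Complex.I + -2*(α:ℂ)*Complex.I) = 0 by ring,
      Complex.exp_zero]
  have hzw : z = w * Complex.exp (-2 * (α:ℂ) * Complex.I) := by
    rw [hzdef, hwdef]
    linear_combination (-(Q:ℂ)) * key
  have hz2 : z = (‖w‖ : ℂ) *
      (Complex.cos ((Complex.arg w - 2*α : ℝ) : ℂ)
        + Complex.sin ((Complex.arg w - 2*α : ℝ) : ℂ) * Complex.I) := by
    calc z = w * Complex.exp (-2 * (α:ℂ) * Complex.I) := hzw
      _ = ((‖w‖ : ℂ) * Complex.exp (Complex.arg w * Complex.I))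
            * Complex.exp (-2 * (α:ℂ) * Complex.I) := by
          rw [Complex.norm_mul_exp_arg_mul_I]
      _ = (‖w‖ : ℂ) * Complex.exp (((Complex.arg w - 2*α : ℝ) : ℂ) * Complex.I) := by
          rw [mul_assoc, ← Complex.exp_add]; congr 2; push_cast; ring
      _ = (‖w‖ : ℂ) *
            (Complex.cos ((Complex.arg w - 2*α : ℝ) : ℂ)
              + Complex.sin ((Complex.arg w - 2*α : ℝ) : ℂ) * Complex.I) := by
          rw [Complex.exp_mul_I]
  have harg : Complex.arg z = Complex.arg w - 2*α := by
    rw [hz2]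
    exact Complex.arg_mul_cos_add_sin_mul_I habs
      (θ := Complex.arg w - 2*α) ⟨by linarith, by linarith⟩
  exact ⟨by rw [show phiPQ P Q α = Complex.arg z from rfl, harg]; linarith,
    by rw [show phiPQ P Q α = Complex.arg z from rfl]; exact hlt⟩

lemma phi_zero (P Q : ℝ) (hP : 0 < P) (hQ : 0 < Q) : phiPQ P Q 0 = 0 := by
  unfold phiPQ
  have : Complex.exp (-2 * ((0:ℝ):ℂ) * Complex.I) * P + Q = ((P + Q : ℝ) : ℂ) := by
    push_cast; simp
  rw [this]
  exact Complex.arg_ofReal_of_nonneg (by positivity)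

lemma phi_odd {P Q : ℝ} (hP : 0 < P) (hQ : 0 < Q) {α : ℝ} (h0 : 0 < α) (h : α < π/2) :
    phiPQ P Q (-α) = -phiPQ P Q α := by
  have hmem := phi_mem hP hQ h0 h
  have hne : phiPQ P Q α ≠ π := by
    have := Real.pi_pos
    intro e; rw [e] at hmem; exact absurd hmem.2 (by linarith)
  have hc : ((starRingEnd ℂ) (-2 * (α:ℂ) * Complex.I)) = -2 * ((-α:ℝ):ℂ) * Complex.I := by
    simp only [map_mul, map_neg, map_ofNat, Complex.conj_ofReal, Complex.conj_I]
    push_cast; ring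
  have hconj : Complex.exp (-2 * ((-α : ℝ):ℂ) * Complex.I) * P + Q
      = (starRingEnd ℂ) (Complex.exp (-2 * (α:ℂ) * Complex.I) * P + Q) := by
    rw [map_add, map_mul, ← Complex.exp_conj, hc, Complex.conj_ofReal, Complex.conj_ofReal]
  unfold phiPQ at hne ⊢
  rw [hconj, Complex.arg_conj, if_neg hne]
lemma phi_cont {P Q : ℝ} (hP : 0 < P) (hQ : 0 < Q) {L : ℝ} (h0 : 0 < L) (h : L < π/2) :
    ContinuousAt (fun x : ℝ => |x + phiPQ P Q x|) L := by
  have hpi := Real.pi_pos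
  have hz : ContinuousAt (fun x : ℝ => Complex.exp (-2 * (x:ℂ) * Complex.I) * P + Q) L := by
    apply Continuous.continuousAt
    apply Continuous.add _ continuous_const
    apply Continuous.mul _ continuous_const
    apply Complex.continuous_exp.comp
    exact (continuous_const.mul Complex.continuous_ofReal).mul continuous_const
  have hsin : 0 < Real.sin (2*L) :=
    Real.sin_pos_of_pos_of_lt_pi (by linarith) (by linarith)
  have him : (Complex.exp (-2*(L:ℂ)*Complex.I)*P+Q).im ≠ 0 := by
    rw [zim]; nlinarith
  have harg : ContinuousAt (fun x : ℝ => phiPQ P Q x) L := by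
    unfold phiPQ
    exact ContinuousAt.comp (g := Complex.arg)
      (Complex.continuousAt_arg (Complex.mem_slitPlane_iff.2 (Or.inr him))) hz
  exact (continuousAt_id.add harg).abs

/-- For `P, Q > 0`, the iteration `α₀ = α ∈ (−π/2, π/2)`,
`α_{n+1} = α_n + arg(e^{−2iα_n} P + Q)` converges to `0`. -/
theorem iteration_converges (P Q : ℝ) (hP : 0 < P) (hQ : 0 < Q)
    (a : ℕ → ℝ) (h0 : a 0 ∈ Set.Ioo (-(π / 2)) (π / 2))
    (hrec : ∀ n, a (n + 1) =
      a n + (Complex.exp (-2 * a n * Complex.I) * P + Q).arg) :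
    Tendsto a atTop (nhds 0) := by
  have hpi := Real.pi_pos
  set g : ℝ → ℝ := fun x => |x + phiPQ P Q x| with hgdef
  set b : ℕ → ℝ := fun n => |a n| with hbdef
  have hg_lt : ∀ x : ℝ, 0 < x → x < π/2 → g x < x := by
    intro x hx1 hx2
    have hm := phi_mem hP hQ hx1 hx2
    exact abs_lt.2 ⟨by linarith [hm.1, hm.2], by linarith [hm.1, hm.2]⟩
  have hg_le : ∀ x : ℝ, 0 ≤ x → x < π/2 → g x ≤ x := by
    intro x hx1 hx2
    rcases eq_or_lt_of_le hx1 with he | hl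
    · simp [hgdef, ← he, phi_zero P Q hP hQ]
    · exact (hg_lt x hl hx2).le
  have hsym : ∀ x : ℝ, |x| < π/2 → |x + phiPQ P Q x| = g (|x|) := by
    intro x hx
    rcases lt_trichotomy x 0 with hneg | hzero | hpos
    · have hx' : 0 < -x := by linarith
      have hx'' : -x < π/2 := by
        have := abs_lt.1 hx; linarith [this.1]
      have hodd := phi_odd hP hQ (P := P) (Q := Q) hx' hx''
      rw [neg_neg] at hodd
      rw [hgdef]
      simp only []
      rw [abs_of_neg hneg, hodd,
        show x + -phiPQ P Q (-x) = -(-x + phiPQ P Q (-x)) by ring, abs_neg]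
    · simp [hgdef, hzero]
    · rw [abs_of_pos hpos]
  have hb0 : b 0 < π/2 := abs_lt.2 ⟨h0.1, h0.2⟩
  have hstep : ∀ n, b n < π/2 → b (n+1) = g (b n) := by
    intro n hn
    have h1 : a (n+1) = a n + phiPQ P Q (a n) := hrec n
    show |a (n+1)| = g (|a n|)
    rw [h1]
    exact hsym (a n) hn
  have hchain : ∀ n, b n < π/2 := by
    intro n
    induction n with
    | zero => exact hb0
    | succ k ih =>
      rw [hstep k ih]
      exact lt_of_le_of_lt (hg_le (b k) (abs_nonneg _) ih) ih
  have hmono : Antitone b := antitone_nat_of_succ_le (fun n => by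
    rw [hstep n (hchain n)]
    exact hg_le (b n) (abs_nonneg _) (hchain n))
  have hbdd : BddBelow (Set.range b) := ⟨0, by rintro x ⟨n, rfl⟩; exact abs_nonneg _⟩
  set L : ℝ := ⨅ n, b n with hLdef
  have htend : Tendsto b atTop (nhds L) := tendsto_atTop_ciInf hmono hbdd
  have hL0 : 0 ≤ L := le_ciInf fun n => abs_nonneg _
  have hLlt : L < π/2 := lt_of_le_of_lt (ciInf_le hbdd 0) hb0
  have hLzero : L = 0 := by
    by_contra hne
    have hLpos : 0 < L := lt_of_le_of_ne hL0 (Ne.symm hne)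
    have hc := phi_cont hP hQ hLpos hLlt
    have h1 : Tendsto (fun n => g (b n)) atTop (nhds (g L)) := by
      have : Tendsto (fun x => |x + phiPQ P Q x|) (nhds L) (nhds (g L)) := hc.tendsto
      exact this.comp htend
    have h2 : Tendsto (fun n => b (n+1)) atTop (nhds L) :=
      htend.comp (tendsto_add_atTop_nat 1)
    have h3 : (fun n => g (b n)) = fun n => b (n+1) := by
      funext n; rw [hstep n (hchain n)]
    rw [h3] at h1
    have : g L = L := tendsto_nhds_unique h1 h2
    exact absurd this (ne_of_lt (hg_lt L hLpos hLlt))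
  rw [hLzero] at htend
  have hlow : Tendsto (fun n => -(b n)) atTop (nhds 0) := by
    simpa using htend.neg
  exact tendsto_of_tendsto_of_tendsto_of_le_of_le hlow htend
    (fun n => neg_abs_le (a n)) (fun n => le_abs_self (a n))
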